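/- For any [n,k,d] linear code C over F_q with 1 ≤ k, the minimum distance equals n minus the maximum size of a coordinate set N ⊆ [n] whose corresponding columns of a generator matrix span a space of dimension less than k; that is, d = n - max{ |N| : N ⊆ [n], rank(N) < k }. -/

import Mathlib

/-- The minimum distance of an [n,k,d] linear code with generator columns
    g_1, ..., g_n equals n - max{|N| : N ⊆ [n], rank(N) < k}. -/
theorem stmt_1 {F : Type*} [Field F] [Fintype F] [DecidableEq F]
    (n k d : ℕ) (hk : 1 ≤ k)
    (g : Fin n → (Fin k → F))
    (hfull : Module.finrank F (Submodule.span F (Set.range g)) = k)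
    (hd : IsLeast {w : ℕ | ∃ x : Fin k → F,
      (fun i => ∑ j, x j * g i j) ≠ (0 : Fin n → F) ∧
      w = (Finset.univ.filter (fun i => (∑ j, x j * g i j) ≠ 0)).card} d) :
    d = n - sSup {m : ℕ | ∃ N : Finset (Fin n),
      Module.finrank F (Submodule.span F (g '' ↑N)) < k ∧ N.card = m} := by
  classical
  have hkfin : Module.finrank F (Fin k → F) = k := by
    simp [Module.finrank_pi]
  have hspan : Submodule.span F (Set.range g) = ⊤ := by
    apply Submodule.eq_top_of_finrank_eq
    rw [hfull, hkfin]
  set S := {m : ℕ | ∃ N : Finset (Fin n),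
      Module.finrank F (Submodule.span F (g '' ↑N)) < k ∧ N.card = m} with hS
  obtain ⟨x, hx, hdw⟩ := hd.1
  have hdn : d ≤ n := by
    rw [hdw]
    exact (Finset.card_filter_le _ _).trans (by simp)
  -- part 1 : n - d ∈ S
  have hmem : (n - d) ∈ S := by
    refine ⟨Finset.univ.filter (fun i => (∑ j, x j * g i j) = 0), ?_, ?_⟩
    · -- functional
      set φ : (Fin k → F) →ₗ[F] F := ∑ j, x j • (LinearMap.proj j) with hφ
      have hφa : ∀ v, φ v = ∑ j, x j * v j := by
        intro v; simp [hφ, LinearMap.sum_apply]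
      have hle : Submodule.span F (g '' ↑(Finset.univ.filter
          (fun i => (∑ j, x j * g i j) = 0))) ≤ LinearMap.ker φ := by
        rw [Submodule.span_le]
        rintro v ⟨i, hi, rfl⟩
        simp only [Finset.coe_filter, Set.mem_setOf_eq] at hi
        simp [LinearMap.mem_ker, hφa, hi.2]
      have hkerne : LinearMap.ker φ ≠ ⊤ := by
        intro h
        apply hx
        funext i
        have : g i ∈ LinearMap.ker φ := h ▸ Submodule.mem_top
        simpa [hφa] using this
      calc Module.finrank F (Submodule.span F (g '' _))
          ≤ Module.finrank F (LinearMap.ker φ) := Submodule.finrank_mono hle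
        _ < Module.finrank F (Fin k → F) := Submodule.finrank_lt hkerne
        _ = k := hkfin
    · have := Finset.card_filter_add_card_filter_not
        (s := Finset.univ) (p := fun i => (∑ j, x j * g i j) = 0)
      simp only [Finset.card_univ, Fintype.card_fin] at this
      have hdw' : d = (Finset.univ.filter (fun i => ¬ (∑ j, x j * g i j = 0))).card := by
        simpa [ne_eq] using hdw
      omega
  -- part 2 : every element of S is ≤ n - d
  have hub : ∀ m ∈ S, m ≤ n - d := by
    rintro m ⟨N, hrk, rfl⟩
    set W := Submodule.span F (g '' ↑N) with hW
    have hWne : W ≠ ⊤ := by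
      intro h
      rw [h, ← hkfin] at hrk
      simp at hrk
    have hi0 : ∃ i0, g i0 ∉ W := by
      by_contra h
      push_neg at h
      apply hWne
      rw [eq_top_iff, ← hspan, Submodule.span_le]
      rintro v ⟨i, rfl⟩; exact h i
    obtain ⟨i0, hi0⟩ := hi0
    obtain ⟨φ, hφ0, hφbot⟩ := W.exists_dual_map_eq_bot_of_notMem hi0 inferInstance
    set y : Fin k → F := fun j => φ (Pi.single j 1) with hy
    have hφa : ∀ v, (∑ j, y j * v j) = φ v := by
      intro v
      conv_rhs => rw [show v = ∑ j, Pi.single j (v j) from (Finset.univ_sum_single v).symm]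
      rw [map_sum]
      refine Finset.sum_congr rfl fun j _ => ?_
      have : (Pi.single j (v j) : Fin k → F) = v j • (Pi.single j 1 : Fin k → F) := by
        rw [← Pi.single_smul, smul_eq_mul, mul_one]
      rw [this, map_smul, smul_eq_mul, hy, mul_comm]
    have hker : ∀ i ∈ N, (∑ j, y j * g i j) = 0 := by
      intro i hi
      rw [hφa]
      have : φ (g i) ∈ W.map φ := Submodule.mem_map_of_mem
        (Submodule.subset_span ⟨i, hi, rfl⟩)
      rw [hφbot] at this
      exact (Submodule.mem_bot F).mp this
    have hc0 : (fun i => ∑ j, y j * g i j) ≠ (0 : Fin n → F) := by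
      intro h
      apply hφ0
      have := congrFun h i0
      rw [hφa] at this
      exact this
    have hdle : d ≤ (Finset.univ.filter (fun i => (∑ j, y j * g i j) ≠ 0)).card :=
      hd.2 ⟨y, hc0, rfl⟩
    have hsub : (Finset.univ.filter (fun i => (∑ j, y j * g i j) ≠ 0)) ⊆ Nᶜ := by
      intro i hi
      simp only [Finset.mem_filter] at hi
      simp only [Finset.mem_compl]
      intro hiN
      exact hi.2 (hker i hiN)
    have hcard : (Finset.univ.filter (fun i => (∑ j, y j * g i j) ≠ 0)).card ≤ n - N.card := by
      have := Finset.card_le_card hsub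
      rwa [Finset.card_compl, Fintype.card_fin] at this
    have hNn : N.card ≤ n := by
      simpa using Finset.card_le_card (Finset.subset_univ N)
    omega
  have hsup : sSup S = n - d := le_antisymm (csSup_le ⟨_, hmem⟩ hub) (le_csSup ⟨n - d, hub⟩ hmem)
  rw [hsup]
  omega
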